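/- Let τ ∈ ℂ with Im τ > 0 and |τ| = 1, and let Γ_τ = {m + n·τ : m, n ∈ ℤ}. Suppose I(z) = a·conj(z) + b with a ∈ ℂ, a ∉ {1, −1}, and b ∈ ℂ is a lift of an antiholomorphic involution of the torus ℂ/Γ_τ. Then I has a fixpoint, i.e. there exists z ∈ ℂ with I(z) − z ∈ Γ_τ. -/

import Mathlib

open Complex

theorem stmt_3 (τ : ℂ) (hτ : 0 < τ.im) (habs : ‖τ‖ = 1)
    (Γ : Set ℂ) (hΓ : Γ = {z : ℂ | ∃ m n : ℤ, z = m + n * τ})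
    (a b : ℂ) (ha : a ≠ 1 ∧ a ≠ -1)
    (I : ℂ → ℂ) (hI : ∀ z : ℂ, I z = a * starRingEnd ℂ z + b)
    (hper : ∀ z : ℂ, ∀ ω ∈ Γ, I (z + ω) - I z ∈ Γ)
    (hinv : ∀ z : ℂ, I (I z) - z ∈ Γ) :
    ∃ z : ℂ, I z - z ∈ Γ := by
  obtain ⟨ha1, ha2⟩ := ha
  subst hΓ
  simp only [Set.mem_setOf_eq] at hper hinv ⊢
  have hsi : τ.im ≠ 0 := ne_of_gt hτ
  -- uniqueness of real coordinates in basis (1, τ)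
  have huniqR : ∀ x y x' y' : ℝ, (x:ℂ) + (y:ℂ)*τ = (x':ℂ) + (y':ℂ)*τ → x = x' ∧ y = y' := by
    intro x y x' y' h
    have him := congrArg Complex.im h
    simp only [Complex.add_im, Complex.mul_im, Complex.ofReal_re, Complex.ofReal_im] at him
    have hy : y = y' := by
      have : y * τ.im = y' * τ.im := by linarith
      exact mul_right_cancel₀ hsi this
    subst hy
    have hre := congrArg Complex.re h
    simp only [Complex.add_re, Complex.mul_re, Complex.ofReal_re, Complex.ofReal_im] at hre
    exact ⟨by linarith, rfl⟩
  have hconjτ : (starRingEnd ℂ) τ = 2*(τ.re:ℂ) - τ := by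
    apply Complex.ext <;> simp <;> ring
  have habs2 : Complex.normSq τ = 1 := by
    rw [← Complex.sq_norm, habs]; norm_num
  have hr2 : τ.re*τ.re + τ.im*τ.im = 1 := by
    rw [← Complex.normSq_apply]; exact habs2
  have hr2lt : τ.re^2 < 1 := by nlinarith [mul_pos hτ hτ]
  have hτsq : τ^2 = 2*(τ.re:ℂ)*τ - 1 := by
    have h1 : τ * ((starRingEnd ℂ) τ) = (Complex.normSq τ : ℝ) := Complex.mul_conj τ
    rw [hconjτ, habs2] at h1
    push_cast at h1
    linear_combination -h1
  -- a ∈ Γ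
  have hmem1 : (1:ℂ) = ((1:ℤ):ℂ) + ((0:ℤ):ℂ)*τ := by push_cast; ring
  obtain ⟨m, n, hmn⟩ := hper 0 1 ⟨1, 0, by push_cast; ring⟩
  have hma : a = (m:ℂ) + (n:ℂ)*τ := by
    rw [← hmn, hI, hI]; simp
  -- a * conj τ ∈ Γ
  obtain ⟨p, q, hpq⟩ := hper 0 τ ⟨0, 1, by push_cast; ring⟩
  have hpqa : a * (starRingEnd ℂ) τ = (p:ℂ) + (q:ℂ)*τ := by
    rw [← hpq, hI, hI]; simp
  -- γ₀ := a * conj b + b ∈ Γ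
  obtain ⟨u, v, huv⟩ := hinv 0
  have hγ : a * (starRingEnd ℂ) b + b = (u:ℂ) + (v:ℂ)*τ := by
    rw [← huv, hI, hI]; simp
  -- |a|^2 = 1
  have haa : a * (starRingEnd ℂ) a = 1 := by
    by_contra haa
    have ht : a * (starRingEnd ℂ) a - 1 ≠ 0 := sub_ne_zero.mpr haa
    set t := a * (starRingEnd ℂ) a - 1 with htdef
    set z : ℂ := (τ/2 - (a * (starRingEnd ℂ) b + b))/t with hzdef
    obtain ⟨m', n', h'⟩ := hinv z
    have hcomp : I (I z) - z = τ/2 := by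
      rw [hI, hI, map_add, map_mul, Complex.conj_conj]
      rw [hzdef]
      field_simp
      ring
    rw [hcomp] at h'
    have h'' : ((0:ℝ):ℂ) + ((1:ℝ):ℂ)*τ = (((2*m' : ℤ):ℝ):ℂ) + (((2*n' : ℤ):ℝ):ℂ)*τ := by
      push_cast
      linear_combination 2*h'
    have := (huniqR 0 1 _ _ h'').2
    have : (2*n' : ℤ) = 1 := by exact_mod_cast this.symm
    omega
  -- conj a in coordinates
  have hca : (starRingEnd ℂ) a = (m:ℂ) + (n:ℂ)*(2*(τ.re:ℂ) - τ) := by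
    rw [hma, map_add, map_mul, hconjτ]
    simp
  -- equation E1 : m^2 + 2mnr + n^2 = 1
  have hE1 : (m:ℝ)^2 + 2*m*n*τ.re + (n:ℝ)^2 = 1 := by
    have h1 : ((m:ℂ) + (n:ℂ)*τ) * ((m:ℂ) + (n:ℂ)*(2*(τ.re:ℂ) - τ)) = 1 := by
      rw [← hma, ← hca]; exact haa
    have := (huniqR ((m:ℝ)^2 + 2*m*n*τ.re + (n:ℝ)^2) 0 1 0 (by
      push_cast
      linear_combination h1 + (n:ℂ)^2 * hτsq)).1
    linarith [this]
  -- equations from a * conj τ = p + q τ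
  have hE2 := huniqR (2*m*τ.re + n) (-m) p q (by
    have h2 : ((m:ℂ) + (n:ℂ)*τ) * (2*(τ.re:ℂ) - τ) = (p:ℂ) + (q:ℂ)*τ := by
      rw [← hma, ← hconjτ]; exact hpqa
    push_cast
    linear_combination h2 + (n:ℂ) * hτsq)
  have hp2 : 2*(m:ℝ)*τ.re + n = p := hE2.1
  have hq : (q:ℤ) = -m := by exact_mod_cast hE2.2.symm
  -- E3 : n * p = 1 - m^2 over ℤ
  have hE3 : n * p = 1 - m^2 := by
    have : (n:ℝ) * p = 1 - (m:ℝ)^2 := by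
      linear_combination (-(n:ℝ))*hp2 + hE1
    exact_mod_cast this
  -- n ≠ 0
  have hn0 : n ≠ 0 := by
    intro h
    rw [h] at hma hE1
    push_cast at hE1 hma
    have hm2 : (m:ℝ) * m = 1 := by nlinarith [hE1]
    have hm2' : m * m = 1 := by exact_mod_cast hm2
    rcases Int.isUnit_iff.mp (isUnit_iff_exists_inv.mpr ⟨m, hm2'⟩) with h1|h1
    · apply ha1; rw [hma, h1]; push_cast; ring
    · apply ha2; rw [hma, h1]; push_cast; ring
  -- constraint C2 from a * conj γ₀ = γ₀
  have hfix : a * (starRingEnd ℂ) ((u:ℂ) + (v:ℂ)*τ) = (u:ℂ) + (v:ℂ)*τ := by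
    rw [← hγ]
    rw [map_add, map_mul, Complex.conj_conj]
    linear_combination b * haa
  have hC2 : n*u - m*v = v := by
    have hexp : ((m:ℂ) + (n:ℂ)*τ) * ((u:ℂ) + (v:ℂ)*(2*(τ.re:ℂ) - τ)) = (u:ℂ) + (v:ℂ)*τ := by
      have : (starRingEnd ℂ) ((u:ℂ) + (v:ℂ)*τ) = (u:ℂ) + (v:ℂ)*(2*(τ.re:ℂ) - τ) := by
        rw [map_add, map_mul, hconjτ]; simp
      rw [← this, ← hma]; exact hfix
    have := (huniqR ((m:ℝ)*u + 2*m*v*τ.re + n*v) ((n:ℝ)*u - m*v) u v (by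
      push_cast
      linear_combination hexp + (n:ℂ)*(v:ℂ) * hτsq)).2
    exact_mod_cast this
  -- key integer bound when m ≠ 0
  have key1 : ∀ z : ℤ, z ≠ 0 → 1 ≤ z^2 := by
    intro z hz
    have h1 := Int.one_le_abs hz
    nlinarith [_root_.sq_abs z, abs_nonneg z]
  -- determine the six cases and produce c with γ₀ = c (1 + a)
  have hcase : ∃ c : ℤ, (u:ℂ) + (v:ℂ)*τ = (c:ℂ) * (1 + a) := by
    by_cases hm0 : m = 0
    · subst hm0
      have hnp : n * p = 1 := by simpa using hE3
      rcases (Int.mul_eq_one_iff_eq_one_or_neg_one).mp hnp with ⟨hn, hp⟩|⟨hn, hp⟩ <;> subst hn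
      · -- a = τ, u = v
        have huv' : u = v := by omega
        refine ⟨u, ?_⟩
        rw [hma, huv']
        push_cast; ring
      · -- a = -τ, v = -u
        have huv' : v = -u := by omega
        refine ⟨u, ?_⟩
        rw [hma, huv']
        push_cast; ring
    · -- show n = m or n = -m
      have hint : (1 - m^2 - n^2)^2 < (2*m*n)^2 := by
        have hR : ((1 - m^2 - n^2 : ℤ):ℝ)^2 < ((2*m*n : ℤ):ℝ)^2 := by
          push_cast
          have he : (1 - (m:ℝ)^2 - (n:ℝ)^2) = 2*m*n*τ.re := by linarith [hE1]
          rw [he]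
          have hmn : ((m:ℝ)*n) ≠ 0 :=
            mul_ne_zero (by exact_mod_cast hm0) (by exact_mod_cast hn0)
          have hmn2 : 0 < ((m:ℝ)*n)^2 :=
            lt_of_le_of_ne (sq_nonneg _) (Ne.symm (pow_ne_zero 2 hmn))
          nlinarith [hr2lt, hmn2]
        exact_mod_cast hR
      have hmn : n = m ∨ n = -m := by
        by_contra h
        push_neg at h
        obtain ⟨h1, h2⟩ := h
        have k1 : 1 ≤ (m-n)^2 := key1 _ (by omega)
        have k2 : 1 ≤ (m+n)^2 := key1 _ (by omega)
        nlinarith [mul_nonneg (by linarith : (0:ℤ) ≤ (m-n)^2 - 1) (by linarith : (0:ℤ) ≤ (m+n)^2 - 1)]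
      rcases hmn with hnm|hnm
      · subst hnm
        have hmp : n*(p+n) = 1 := by linear_combination hE3
        rcases (Int.mul_eq_one_iff_eq_one_or_neg_one).mp hmp with ⟨hm, hpm⟩|⟨hm, hpm⟩ <;> subst hm
        · -- a = 1 + τ, u = 2v
          have huv' : u = 2*v := by omega
          refine ⟨v, ?_⟩
          rw [hma, huv']
          push_cast; ring
        · -- a = -1 - τ, u = 0
          have hu0 : u = 0 := by omega
          refine ⟨-v, ?_⟩
          rw [hma, hu0]
          push_cast; ring
      · subst hnm
        have hmp : m*(m-p) = 1 := by linear_combination hE3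
        rcases (Int.mul_eq_one_iff_eq_one_or_neg_one).mp hmp with ⟨hm, hpm⟩|⟨hm, hpm⟩ <;> subst hm
        · -- a = 1 - τ, u = -2v
          have huv' : u = -2*v := by omega
          refine ⟨-v, ?_⟩
          rw [hma, huv']
          push_cast; ring
        · -- a = -1 + τ, u = 0
          have hu0 : u = 0 := by omega
          refine ⟨v, ?_⟩
          rw [hma, hu0]
          push_cast; ring
  obtain ⟨c, hc⟩ := hcase
  have hγc : a * (starRingEnd ℂ) b + b = (c:ℂ) * (1 + a) := hγ.trans hc
  refine ⟨(b - (c:ℂ))/2, c, 0, ?_⟩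
  rw [hI]
  have hcz : (starRingEnd ℂ) ((b - (c:ℂ))/2) = ((starRingEnd ℂ) b - (c:ℂ))/2 := by
    rw [map_div₀, map_sub, map_ofNat]
    norm_num
  rw [hcz]
  push_cast
  linear_combination hγc/2
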